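/- arXiv:2112.05942 — 2 statements merged into one kernel-verified Lean document; each statement's English description precedes it below -/
import Mathlib

section
/- Let n ≥ 2 be an integer, ℓ a natural number, and a > 0 a real number. Let M : Matrix (Fin 4) (Fin 4) ℝ be the matrix with rows (ℓ, 2−ℓ−n, ℓ+2, 4−ℓ−n), (ℓ·a^{ℓ−1}, (2−ℓ−n)·a^{−(ℓ+n−1)}, (ℓ+2)·a^{ℓ+1}, (4−ℓ−n)·a^{−(ℓ+n−3)}), (0, 0, ℓ(2ℓ+n), (2ℓ+n−4)(ℓ+n−2)), and (0, 0, ℓ(2ℓ+n)·a^{ℓ−1}, (2ℓ+n−4)(ℓ+n−2)·a^{−(ℓ+n−1)}), where all entries are real numbers (ℓ and n cast to ℝ) and powers are Real.rpow. Then det M = −(a^{ℓ−1} − a^{−(ℓ+n−1)})² · ℓ² · (2ℓ+n) · (2ℓ+n−4) · (ℓ+n−2)². -/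
open Real

/-- The matrix obtained by imposing `∂_ν u = 0` and `∂_ν(Δu) = 0` on both boundary
components of the annulus `{a < |x| < 1} ⊆ ℝⁿ` for the biharmonic mode
`u(r) = A r^ℓ + B r^{2-ℓ-n} + C r^{ℓ+2} + D r^{4-ℓ-n}`. -/
noncomputable def annulusZeroMatrix (n ℓ : ℕ) (a : ℝ) : Matrix (Fin 4) (Fin 4) ℝ :=
  !![(ℓ : ℝ), 2 - ℓ - n, (ℓ : ℝ) + 2, 4 - ℓ - n;
     (ℓ : ℝ) * a ^ ((ℓ : ℝ) - 1), (2 - (ℓ : ℝ) - n) * a ^ (-((ℓ : ℝ) + n - 1)),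
       ((ℓ : ℝ) + 2) * a ^ ((ℓ : ℝ) + 1), (4 - (ℓ : ℝ) - n) * a ^ (-((ℓ : ℝ) + n - 3));
     0, 0, (ℓ : ℝ) * (2 * ℓ + n), (2 * (ℓ : ℝ) + n - 4) * ((ℓ : ℝ) + n - 2);
     0, 0, (ℓ : ℝ) * (2 * ℓ + n) * a ^ ((ℓ : ℝ) - 1),
       (2 * (ℓ : ℝ) + n - 4) * ((ℓ : ℝ) + n - 2) * a ^ (-((ℓ : ℝ) + n - 1))]

theorem annulusZeroMatrix_det (n : ℕ) (hn : 2 ≤ n) (ℓ : ℕ) (a : ℝ) (ha : 0 < a) :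
    (annulusZeroMatrix n ℓ a).det =
      -(a ^ ((ℓ : ℝ) - 1) - a ^ (-((ℓ : ℝ) + n - 1))) ^ 2 * (ℓ : ℝ) ^ 2 *
        (2 * (ℓ : ℝ) + n) * (2 * (ℓ : ℝ) + n - 4) * ((ℓ : ℝ) + n - 2) ^ 2 := by
  simp [annulusZeroMatrix, Matrix.det_succ_row_zero, Fin.sum_univ_succ, Fin.succAbove]
  ring
end

section
/- Let n ≥ 2 be an integer, ℓ ≥ 1 a natural number with (ℓ,n) ≠ (1,2) (equivalently 2ℓ+n ≠ 4), and let a ∈ (0,1). Then the matrix M : Matrix (Fin 4) (Fin 4) ℝ with rows (ℓ, 2−ℓ−n, ℓ+2, 4−ℓ−n), (ℓ·a^{ℓ−1}, (2−ℓ−n)·a^{−(ℓ+n−1)}, (ℓ+2)·a^{ℓ+1}, (4−ℓ−n)·a^{−(ℓ+n−3)}), (0, 0, ℓ(2ℓ+n), (2ℓ+n−4)(ℓ+n−2)), (0, 0, ℓ(2ℓ+n)·a^{ℓ−1}, (2ℓ+n−4)(ℓ+n−2)·a^{−(ℓ+n−1)}) has nonzero determinant; in particular the homogeneous linear system Mx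 = 0 has only the trivial solution. -/
open Real

theorem det_fin_four' (A : Matrix (Fin 4) (Fin 4) ℝ) :
    A.det = A 0 0*A 1 1*A 2 2*A 3 3 - A 0 0*A 1 1*A 2 3*A 3 2 - A 0 0*A 1 2*A 2 1*A 3 3 + A 0 0*A 1 2*A 2 3*A 3 1 + A 0 0*A 1 3*A 2 1*A 3 2 - A 0 0*A 1 3*A 2 2*A 3 1 - A 0 1*A 1 0*A 2 2*A 3 3 + A 0 1*A 1 0*A 2 3*A 3 2 + A 0 1*A 1 2*A 2 0*A 3 3 - A 0 1*A 1 2*A 2 3*A 3 0 - A 0 1*A 1 3*A 2 0*A 3 2 + A 0 1*A 1 3*A 2 2*A 3 0 + A 0 2*A 1 0*A 2 1*A 3 3 - A 0 2*A 1 0*A 2 3*A 3 1 - A 0 2*A 1 1*A 2 0*A 3 3 + A 0 2*A 1 1*A 2 3*A 3 0 + A 0 2*A 1 3*A 2 0*A 3 1 - A 0 2*A 1 3*A 2 1*A 3 0 - A 0 3*A 1 0*A 2 1*A 3 2 + A 0 3*A 1 0*A 2 2*A 3 1 + A 0 3*A 1 1*A 2 0*A 3 2 - A 0 3*A 1 1*A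 2 2*A 3 0 - A 0 3*A 1 2*A 2 0*A 3 1 + A 0 3*A 1 2*A 2 1*A 3 0 := by
  rw [Matrix.det_succ_row_zero]
  simp [Fin.sum_univ_succ, Matrix.det_fin_three, Fin.succAbove, Matrix.submatrix_apply]
  have h1 : (Fin.succ 2 : Fin 4) = 3 := rfl
  have h3 : (Fin.castSucc (2 : Fin 3)) = (2 : Fin 4) := by decide
  ring

theorem annulusZeroMatrix_det_ne_zero (n : ℕ) (hn : 2 ≤ n) (ℓ : ℕ) (hℓ : 1 ≤ ℓ)
    (hℓn : 2 * ℓ + n ≠ 4) (a : ℝ) (ha : a ∈ Set.Ioo (0 : ℝ) 1) :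
    (annulusZeroMatrix n ℓ a).det ≠ 0 ∧
      ∀ x : Fin 4 → ℝ, (annulusZeroMatrix n ℓ a).mulVec x = 0 → x = 0 := by
  obtain ⟨ha0, ha1⟩ := ha
  have hℓ1 : (1 : ℝ) ≤ (ℓ : ℝ) := by exact_mod_cast hℓ
  have hn2 : (2 : ℝ) ≤ (n : ℝ) := by exact_mod_cast hn
  set X := a ^ (-((ℓ : ℝ) + n - 1)) with hX
  set Y := a ^ ((ℓ : ℝ) - 1) with hY
  have hYle : Y ≤ 1 := by
    apply Real.rpow_le_one ha0.le ha1.le; linarith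
  have hXgt : 1 < X := by
    rw [hX]
    rw [Real.one_lt_rpow_iff_of_pos ha0]
    right; constructor; exact ha1; linarith
  have hXY : X - Y > 0 := by linarith
  have hdet : (annulusZeroMatrix n ℓ a).det =
      (ℓ : ℝ) ^ 2 * (2 - ℓ - n) * (2 * ℓ + n) * (2 * (ℓ : ℝ) + n - 4) * ((ℓ : ℝ) + n - 2)
        * (X - Y) ^ 2 := by
    rw [hX, hY, det_fin_four']
    simp only [annulusZeroMatrix, Matrix.cons_val', Matrix.cons_val_zero, Matrix.cons_val_one,
      Matrix.head_cons, Matrix.empty_val', Matrix.cons_val_fin_one, Matrix.head_fin_const,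
      Matrix.cons_val_two, Matrix.cons_val_three, Matrix.of_apply, Matrix.vecHead, Matrix.vecTail,
      Function.comp_apply, Fin.succ_zero_eq_one, Fin.succ_one_eq_two]
    ring
  have h1 : (ℓ : ℝ) ^ 2 ≠ 0 := by positivity
  have h2 : (2 - (ℓ : ℝ) - n) ≠ 0 := by linarith
  have h3 : (2 * (ℓ : ℝ) + n) ≠ 0 := by linarith
  have h4 : (2 * (ℓ : ℝ) + n - 4) ≠ 0 := by
    intro h
    apply hℓn
    have : ((2 * ℓ + n : ℕ) : ℝ) = 4 := by push_cast; linarith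
    exact_mod_cast this
  have h5 : ((ℓ : ℝ) + n - 2) ≠ 0 := by linarith
  have h6 : (X - Y) ^ 2 ≠ 0 := by positivity
  have hne : (annulusZeroMatrix n ℓ a).det ≠ 0 := by
    rw [hdet]
    exact mul_ne_zero (mul_ne_zero (mul_ne_zero (mul_ne_zero (mul_ne_zero h1 h2) h3) h4) h5) h6
  refine ⟨hne, fun x hx => ?_⟩
  have hu : IsUnit (annulusZeroMatrix n ℓ a).det := isUnit_iff_ne_zero.2 hne
  have := Matrix.nonsing_inv_mul (annulusZeroMatrix n ℓ a) hu
  calc x = ((annulusZeroMatrix n ℓ a)⁻¹ * annulusZeroMatrix n ℓ a).mulVec x := by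
          rw [this, Matrix.one_mulVec]
    _ = (annulusZeroMatrix n ℓ a)⁻¹.mulVec ((annulusZeroMatrix n ℓ a).mulVec x) := by
          rw [Matrix.mulVec_mulVec]
    _ = 0 := by rw [hx, Matrix.mulVec_zero]
end
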